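/- Let z_1, …, z_N be independent standard Gaussian random variables, a, b ∈ ℝ^N, and y = Σ_{j=1}^N (a_j z_j² + b_j z_j). Then for every η > 0, the lower tail satisfies P( y − E{y} ≤ −η ) ≤ exp( − (η²/8) / ( (‖a‖₂² + (1/2)‖b‖₂²) + ‖a‖_∞ η ) ). -/

import Mathlib

open MeasureTheory ProbabilityTheory Real Filter
open scoped ENNReal NNReal

noncomputable section
namespace GQLT


lemma integrable_rexp_quadratic {p : ℝ} (hp : 0 < p) (q : ℝ) :
    Integrable (fun x : ℝ => rexp (-p * x^2 + q * x)) := by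
  have h := integrable_cexp_quadratic (b := (p:ℂ)) (by simpa using hp) (q:ℂ) 0
  have h2 := h.re
  refine h2.congr (Filter.Eventually.of_forall fun x => ?_)
  have : (-(p:ℂ) * (x:ℂ)^2 + (q:ℂ) * (x:ℂ) + 0) = ((-p * x^2 + q * x : ℝ) : ℂ) := by
    push_cast; ring
  show (Complex.exp (-(p:ℂ) * (x:ℂ)^2 + (q:ℂ) * (x:ℂ) + 0)).re = rexp (-p * x^2 + q * x)
  rw [this, Complex.exp_ofReal_re]

lemma integral_rexp_quadratic {p : ℝ} (hp : 0 < p) (q : ℝ) :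
    ∫ x : ℝ, rexp (-p * x^2 + q * x) = Real.sqrt (π / p) * rexp (q^2 / (4*p)) := by
  have h := integral_cexp_quadratic (b := (-p:ℂ)) (by simpa using hp) (q:ℂ) 0
  have hL : ∫ x : ℝ, Complex.exp ((-p:ℂ) * (x:ℂ)^2 + (q:ℂ) * (x:ℂ) + 0)
      = ((∫ x : ℝ, rexp (-p * x^2 + q * x) : ℝ) : ℂ) := by
    calc ∫ x : ℝ, Complex.exp ((-p:ℂ) * (x:ℂ)^2 + (q:ℂ) * (x:ℂ) + 0)
        = ∫ x : ℝ, ((rexp (-p * x^2 + q * x) : ℝ) : ℂ) := by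
          congr 1; ext x
          have hx : ((-p:ℂ)) * (x:ℂ)^2 + (q:ℂ) * (x:ℂ) + 0 = ((-p * x^2 + q * x : ℝ) : ℂ) := by
            push_cast; ring
          rw [hx, Complex.ofReal_exp]
      _ = ((∫ x : ℝ, rexp (-p * x^2 + q * x) : ℝ) : ℂ) := integral_ofReal
  have hR : ((π:ℂ) / -(-p:ℂ)) ^ (1/2 : ℂ) * Complex.exp (0 - (q:ℂ)^2 / (4 * (-p:ℂ)))
      = ((Real.sqrt (π / p) * rexp (q^2 / (4*p)) : ℝ) : ℂ) := by
    have h1 : ((π:ℂ) / -(-p:ℂ)) = ((π / p : ℝ) : ℂ) := by push_cast; ring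
    have h2 : (0 - (q:ℂ)^2 / (4 * (-p:ℂ))) = ((q^2 / (4*p) : ℝ) : ℂ) := by
      push_cast; field_simp
      ring
    have h3 : ((1:ℂ)/2) = ((1/2 : ℝ) : ℂ) := by norm_num
    rw [h1, h2, h3, ← Complex.ofReal_cpow (by positivity : (0:ℝ) ≤ π / p),
      ← Real.sqrt_eq_rpow, ← Complex.ofReal_exp, ← Complex.ofReal_mul]
  rw [hL, hR] at h
  exact_mod_cast h

lemma integrable_sq_weight : Integrable (fun x : ℝ => x^2 * rexp (-x^2/2)) := by
  have h := integrable_rpow_mul_exp_neg_mul_sq (by norm_num : (0:ℝ) < 1/2)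
    (by norm_num : (-1:ℝ) < ((2:ℕ):ℝ))
  refine h.congr (Eventually.of_forall fun x => ?_)
  show x ^ ((2:ℕ):ℝ) * rexp (-(1/2) * x^2) = x^2 * rexp (-x^2/2)
  rw [Real.rpow_natCast]
  congr 1
  ring

lemma integrable_id_weight : Integrable (fun x : ℝ => x * rexp (-x^2/2)) := by
  have h := integrable_rpow_mul_exp_neg_mul_sq (by norm_num : (0:ℝ) < 1/2)
    (by norm_num : (-1:ℝ) < ((1:ℕ):ℝ))
  refine h.congr (Eventually.of_forall fun x => ?_)
  show x ^ ((1:ℕ):ℝ) * rexp (-(1/2) * x^2) = x * rexp (-x^2/2)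
  rw [Real.rpow_natCast, pow_one]
  congr 1
  ring

lemma integrable_exp_weight : Integrable (fun x : ℝ => rexp (-x^2/2)) := by
  have h : Integrable (fun x : ℝ => rexp (-(1/2) * x^2)) := integrable_exp_neg_mul_sq (by norm_num)
  refine h.congr (Eventually.of_forall fun x => ?_)
  show rexp (-(1/2) * x^2) = rexp (-x^2/2)
  congr 1
  ring

lemma integral_exp_weight : ∫ x : ℝ, rexp (-x^2/2) = Real.sqrt (2*π) := by
  have h := integral_gaussian (1/2)
  rw [show π / (1/2 : ℝ) = 2*π by ring] at h
  rw [← h]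
  congr 1; ext x; congr 1; ring

lemma integral_one_sub_sq_weight : ∫ x : ℝ, (1 - x^2) * rexp (-x^2/2) = 0 := by
  have hint : Integrable (fun x : ℝ => (1 - x^2) * rexp (-x^2/2)) := by
    refine (integrable_exp_weight.sub integrable_sq_weight).congr
      (Eventually.of_forall fun x => ?_)
    show rexp (-x^2/2) - x^2 * rexp (-x^2/2) = (1 - x^2) * rexp (-x^2/2)
    ring
  have hderiv : ∀ x : ℝ, HasDerivAt (fun y : ℝ => y * rexp (-y^2/2))
      ((1 - x^2) * rexp (-x^2/2)) x := by
    intro x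
    have h1 : HasDerivAt (fun y : ℝ => -y^2/2) (-x) x := by
      have h0 := (hasDerivAt_pow 2 x).neg.div_const 2
      rw [show (-(((2:ℕ):ℝ) * x ^ (2-1)) / 2 : ℝ) = -x by push_cast; ring] at h0
      exact h0
    have h2 := h1.exp
    have h3 := (hasDerivAt_id x).mul h2
    rw [show (1 - x^2) * rexp (-x^2/2) = 1 * rexp (-x^2/2) + id x * (rexp (-x^2/2) * -x) by
      simp only [id]; ring]
    exact h3
  have htend : Tendsto (fun x : ℝ => x * rexp (-x^2/2)) atTop (nhds 0) := by
    have hhalf : Tendsto (fun x : ℝ => rexp (-(1/2) * x)) atTop (nhds 0) := by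
      have h := tendsto_exp_neg_atTop_nhds_zero.comp
        (tendsto_id.const_mul_atTop (by norm_num : (0:ℝ) < 1/2))
      refine h.congr fun x => ?_
      simp only [Function.comp_apply, id_eq]
      ring_nf
    have h := (rpow_mul_exp_neg_mul_sq_isLittleO_exp_neg (by norm_num : (0:ℝ) < 1/2)
      1).isBigO.trans_tendsto hhalf
    refine h.congr' ?_
    filter_upwards [eventually_gt_atTop (0:ℝ)] with x hx
    rw [Real.rpow_one]
    congr 1
    ring
  have hIoi : ∫ x in Set.Ioi (0:ℝ), (1 - x^2) * rexp (-x^2/2) = 0 := by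
    have := integral_Ioi_of_hasDerivAt_of_tendsto' (a := 0)
      (f := fun y : ℝ => y * rexp (-y^2/2))
      (f' := fun y : ℝ => (1 - y^2) * rexp (-y^2/2))
      (fun x _ => hderiv x) hint.integrableOn htend
    simpa using this
  have hIic : ∫ x in Set.Iic (0:ℝ), (1 - x^2) * rexp (-x^2/2) = 0 := by
    have h := integral_comp_neg_Iic (0:ℝ) (fun x => (1 - x^2) * rexp (-x^2/2))
    simp only [neg_zero] at h
    calc ∫ x in Set.Iic (0:ℝ), (1 - x^2) * rexp (-x^2/2)
        = ∫ x in Set.Iic (0:ℝ), (1 - (-x)^2) * rexp (-(-x)^2/2) := by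
          refine setIntegral_congr_fun measurableSet_Iic fun x _ => ?_
          show (1 - x^2) * rexp (-x^2/2) = (1 - (-x)^2) * rexp (-(-x)^2/2)
          ring_nf
      _ = ∫ x in Set.Ioi (0:ℝ), (1 - x^2) * rexp (-x^2/2) := h
      _ = 0 := hIoi
  rw [← intervalIntegral.integral_Iic_add_Ioi (b := (0:ℝ)) hint.integrableOn hint.integrableOn,
    hIic, hIoi]
  norm_num

lemma integral_sq_weight : ∫ x : ℝ, x^2 * rexp (-x^2/2) = Real.sqrt (2*π) := by
  have h := integral_one_sub_sq_weight
  have hsub : ∫ x : ℝ, (1 - x^2) * rexp (-x^2/2)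
      = (∫ x : ℝ, rexp (-x^2/2)) - ∫ x : ℝ, x^2 * rexp (-x^2/2) := by
    rw [← integral_sub integrable_exp_weight integrable_sq_weight]
    congr 1; ext x
    show (1 - x^2) * rexp (-x^2/2) = rexp (-x^2/2) - x^2 * rexp (-x^2/2)
    ring
  rw [hsub, integral_exp_weight] at h
  linarith

lemma integral_id_weight : ∫ x : ℝ, x * rexp (-x^2/2) = 0 := by
  have h := integral_neg_eq_self (fun x : ℝ => x * rexp (-x^2/2)) volume
  have h2 : ∫ x : ℝ, (fun x : ℝ => x * rexp (-x^2/2)) (-x) = - ∫ x : ℝ, x * rexp (-x^2/2) := by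
    rw [← integral_neg]
    congr 1; ext x
    show (-x) * rexp (-(-x)^2/2) = -(x * rexp (-x^2/2))
    ring_nf
  linarith [h.symm.trans h2]

lemma gauss_eq : gaussianReal 0 1 =
    (volume : Measure ℝ).withDensity fun x => ENNReal.ofReal ((Real.sqrt (2 * π))⁻¹ * Real.exp (-x^2/2)) := by
  rw [gaussianReal_of_var_ne_zero _ one_ne_zero]
  congr 1
  ext x
  simp [gaussianPDF, gaussianPDFReal]

lemma pdf_nonneg (x : ℝ) : 0 ≤ (Real.sqrt (2 * π))⁻¹ * Real.exp (-x^2/2) := by positivity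

lemma integral_gauss (f : ℝ → ℝ) :
    ∫ x, f x ∂(gaussianReal 0 1)
      = ∫ x, ((Real.sqrt (2 * π))⁻¹ * Real.exp (-x^2/2)) * f x := by
  rw [gauss_eq]
  have hm : Measurable fun x : ℝ => ((Real.sqrt (2 * π))⁻¹ * Real.exp (-x^2/2)).toNNReal := by
    measurability
  rw [show (fun x : ℝ => ENNReal.ofReal ((Real.sqrt (2 * π))⁻¹ * Real.exp (-x^2/2)))
      = (fun x : ℝ => (((Real.sqrt (2 * π))⁻¹ * Real.exp (-x^2/2)).toNNReal : ℝ≥0∞)) from rfl,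
    integral_withDensity_eq_integral_smul hm]
  congr 1
  ext x
  rw [NNReal.smul_def, Real.coe_toNNReal _ (pdf_nonneg x), smul_eq_mul]

lemma integrable_gauss_iff (f : ℝ → ℝ) :
    Integrable f (gaussianReal 0 1)
      ↔ Integrable (fun x => ((Real.sqrt (2 * π))⁻¹ * Real.exp (-x^2/2)) * f x) volume := by
  rw [gauss_eq]
  have hm : Measurable fun x : ℝ => ((Real.sqrt (2 * π))⁻¹ * Real.exp (-x^2/2)).toNNReal := by
    measurability
  rw [show (fun x : ℝ => ENNReal.ofReal ((Real.sqrt (2 * π))⁻¹ * Real.exp (-x^2/2)))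
      = (fun x : ℝ => (((Real.sqrt (2 * π))⁻¹ * Real.exp (-x^2/2)).toNNReal : ℝ≥0∞)) from rfl,
    integrable_withDensity_iff_integrable_smul hm]
  constructor <;> intro h <;> [skip; skip] <;>
  · refine h.congr (Filter.Eventually.of_forall fun x => ?_)
    simp only [NNReal.smul_def, Real.coe_toNNReal _ (pdf_nonneg x), smul_eq_mul]

-- placeholders from previous parts
lemma sqrt_two_pi_pos : 0 < Real.sqrt (2*π) := Real.sqrt_pos.mpr (by positivity)

lemma integrable_gauss_exp {s : ℝ} (u : ℝ) (hs : s < 1/2) :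
    Integrable (fun x => rexp (s * x^2 + u * x)) (gaussianReal 0 1) := by
  rw [integrable_gauss_iff]
  have hp : 0 < 1/2 - s := by linarith
  refine ((integrable_rexp_quadratic hp u).const_mul (Real.sqrt (2*π))⁻¹).congr
    (Eventually.of_forall fun x => ?_)
  show (Real.sqrt (2*π))⁻¹ * rexp (-(1/2 - s) * x^2 + u * x)
      = (Real.sqrt (2*π))⁻¹ * rexp (-x^2/2) * rexp (s * x^2 + u * x)
  rw [mul_assoc, ← Real.exp_add]
  congr 2
  ring

lemma integral_gauss_exp {s : ℝ} (u : ℝ) (hs : s < 1/2) :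
    ∫ x, rexp (s * x^2 + u * x) ∂(gaussianReal 0 1)
      = (Real.sqrt (1 - 2*s))⁻¹ * rexp (u^2 / (2*(1-2*s))) := by
  have hp : 0 < 1/2 - s := by linarith
  rw [integral_gauss]
  calc ∫ x, ((Real.sqrt (2*π))⁻¹ * rexp (-x^2/2)) * rexp (s * x^2 + u * x)
      = ∫ x, (Real.sqrt (2*π))⁻¹ * rexp (-(1/2 - s) * x^2 + u * x) := by
        congr 1; ext x
        rw [mul_assoc, ← Real.exp_add]
        congr 2
        ring
    _ = (Real.sqrt (2*π))⁻¹ * (Real.sqrt (π / (1/2 - s)) * rexp (u^2 / (4*(1/2 - s)))) := by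
        rw [integral_const_mul, integral_rexp_quadratic hp u]
    _ = (Real.sqrt (1 - 2*s))⁻¹ * rexp (u^2 / (2*(1-2*s))) := by
        have h1 : Real.sqrt (2*π) = Real.sqrt 2 * Real.sqrt π := Real.sqrt_mul (by norm_num) _
        have h2 : Real.sqrt (π / (1/2 - s)) = Real.sqrt π / Real.sqrt (1/2 - s) :=
          Real.sqrt_div pi_pos.le _
        have h3 : Real.sqrt (1 - 2*s) = Real.sqrt 2 * Real.sqrt (1/2 - s) := by
          rw [← Real.sqrt_mul (by norm_num)]
          congr 1
          ring
        have h4 : u^2 / (4*(1/2 - s)) = u^2 / (2*(1-2*s)) := by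
          congr 1
          ring
        rw [h1, h2, h3, h4]
        have e2 : Real.sqrt 2 ≠ 0 := by positivity
        have eπ : Real.sqrt π ≠ 0 := by positivity
        have es : Real.sqrt (1/2 - s) ≠ 0 := by positivity
        have hs2 : (0:ℝ) < 1 - 2*s := by linarith
        have es2 : Real.sqrt (1 - 2*s) ≠ 0 := by positivity
        field_simp

lemma integrable_gauss_poly (a b : ℝ) :
    Integrable (fun x => a * x^2 + b * x) (gaussianReal 0 1) := by
  rw [integrable_gauss_iff]
  refine (((integrable_sq_weight.const_mul a).add
    (integrable_id_weight.const_mul b)).const_mul (Real.sqrt (2*π))⁻¹).congr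
    (Eventually.of_forall fun x => ?_)
  show (Real.sqrt (2*π))⁻¹ * (a * (x^2 * rexp (-x^2/2)) + b * (x * rexp (-x^2/2)))
      = (Real.sqrt (2*π))⁻¹ * rexp (-x^2/2) * (a * x^2 + b * x)
  ring

lemma integral_gauss_poly (a b : ℝ) :
    ∫ x, (a * x^2 + b * x) ∂(gaussianReal 0 1) = a := by
  rw [integral_gauss]
  calc ∫ x, ((Real.sqrt (2*π))⁻¹ * rexp (-x^2/2)) * (a * x^2 + b * x)
      = ∫ x, (Real.sqrt (2*π))⁻¹ * (a * (x^2 * rexp (-x^2/2)) + b * (x * rexp (-x^2/2))) := by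
        congr 1; ext x; ring
    _ = (Real.sqrt (2*π))⁻¹ * (a * (∫ x : ℝ, x^2 * rexp (-x^2/2)) + b * (∫ x : ℝ, x * rexp (-x^2/2))) := by
        rw [integral_const_mul]
        congr 1
        rw [integral_add ((integrable_sq_weight.const_mul a)) ((integrable_id_weight.const_mul b)),
          integral_const_mul, integral_const_mul]
    _ = a := by
        rw [integral_sq_weight, integral_id_weight]
        field_simp
        ring

lemma log_lower {y : ℝ} (hy : |y| < 1) : y - y^2/(1-|y|) ≤ Real.log (1+y) := by
  have h := Real.abs_log_sub_add_sum_range_le (x := -y) (by rwa [abs_neg]) 1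
  simp only [Finset.sum_range_one, pow_one, abs_neg, sub_neg_eq_add, Nat.cast_zero, zero_add,
    pow_one, div_one] at h
  norm_num at h
  have h3 := (abs_le.mp h).1
  linarith

/-- Per-coordinate MGF bound. -/
lemma key_coord {t L a b : ℝ} (ht : 0 < t) (hLa : |a| ≤ L) (htL : 2*t*L ≤ 1/2) :
    (Real.sqrt (1 + 2*t*a))⁻¹ * rexp (t^2*b^2/(2*(1 + 2*t*a)))
      ≤ rexp (-(t*a) + (2*t^2*a^2 + t^2*b^2/2)/(1 - 2*t*L)) := by
  have hL0 : 0 ≤ L := le_trans (abs_nonneg a) hLa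
  have hy : |2*t*a| ≤ 2*t*L := by
    rw [abs_mul, abs_mul]
    have h2 : |(2:ℝ)| = 2 := by norm_num
    rw [h2, abs_of_pos ht]
    gcongr
  have hden : (0:ℝ) < 1 - 2*t*L := by linarith
  have hpos : (0:ℝ) < 1 + 2*t*a := by
    have := (abs_le.mp hy).1
    linarith
  have hb : t^2*b^2/(2*(1 + 2*t*a)) ≤ (t^2*b^2/2)/(1 - 2*t*L) := by
    rw [div_le_div_iff₀ (by linarith) hden]
    have h1 : 1 - 2*t*L ≤ 1 + 2*t*a := by
      have := (abs_le.mp hy).1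
      linarith
    nlinarith [sq_nonneg (t*b)]
  have key : rexp (2*t*a - 4*t^2*a^2/(1 - 2*t*L)) ≤ 1 + 2*t*a := by
    have hyl : |2*t*a| < 1 := lt_of_le_of_lt hy (by linarith)
    have hlog := log_lower hyl
    have h4 : (2*t*a)^2 = 4*t^2*a^2 := by ring
    rw [h4] at hlog
    have h1 : 4*t^2*a^2/(1-|2*t*a|) ≤ 4*t^2*a^2/(1 - 2*t*L) := by
      have h2 : 1 - 2*t*L ≤ 1 - |2*t*a| := by linarith
      rw [div_le_div_iff₀ (by linarith [(abs_le.mp hy).2]) hden]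
      nlinarith [sq_nonneg (2*t*a), abs_nonneg (2*t*a)]
    have h3 : 2*t*a - 4*t^2*a^2/(1 - 2*t*L) ≤ Real.log (1 + 2*t*a) := by linarith
    calc rexp (2*t*a - 4*t^2*a^2/(1 - 2*t*L)) ≤ rexp (Real.log (1 + 2*t*a)) :=
          Real.exp_le_exp.mpr h3
      _ = 1 + 2*t*a := Real.exp_log hpos
  have hsq : rexp (-(-(t*a) + 2*t^2*a^2/(1 - 2*t*L))) ≤ Real.sqrt (1 + 2*t*a) := by
    rw [show (-(-(t*a) + 2*t^2*a^2/(1 - 2*t*L))) = (2*t*a - 4*t^2*a^2/(1 - 2*t*L))/2 by ring,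
      Real.exp_half]
    exact Real.sqrt_le_sqrt key
  have ha : (Real.sqrt (1 + 2*t*a))⁻¹ ≤ rexp (-(t*a) + 2*t^2*a^2/(1 - 2*t*L)) := by
    have h6 : (Real.sqrt (1 + 2*t*a))⁻¹
        ≤ (rexp (-(-(t*a) + 2*t^2*a^2/(1 - 2*t*L))))⁻¹ := by
      gcongr
    rwa [Real.exp_neg, inv_inv] at h6
  calc (Real.sqrt (1 + 2*t*a))⁻¹ * rexp (t^2*b^2/(2*(1 + 2*t*a)))
      ≤ rexp (-(t*a) + 2*t^2*a^2/(1 - 2*t*L)) * rexp ((t^2*b^2/2)/(1 - 2*t*L)) := by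
        have e1 : (0:ℝ) ≤ (Real.sqrt (1 + 2*t*a))⁻¹ := by positivity
        exact mul_le_mul ha (Real.exp_le_exp.mpr hb) (Real.exp_pos _).le (Real.exp_pos _).le
    _ = rexp (-(t*a) + (2*t^2*a^2 + t^2*b^2/2)/(1 - 2*t*L)) := by
        rw [← Real.exp_add]
        congr 1
        field_simp
        ring

/-- Final scalar optimization inequality. -/
lemma final_ineq {V W L η : ℝ} (hV : 0 < V) (hL : 0 ≤ L) (hη : 0 < η) (hW0 : 0 ≤ W)
    (hW : W ≤ 2*V) :
    -(η/(4*(V+L*η)))*η + (η/(4*(V+L*η)))^2*W/(1-2*(η/(4*(V+L*η)))*L)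
      ≤ -(η^2/8)/(V+L*η) := by
  set D := V + L*η with hD
  have hDpos : 0 < D := by positivity
  have hden : 1-2*(η/(4*D))*L = (2*V + L*η)/(2*D) := by
    field_simp
    ring
  rw [hden]
  have h2VL : 0 < 2*V + L*η := by positivity
  have e1 : (η/(4*D))^2*W/((2*V + L*η)/(2*D)) = W*η^2/(8*D*(2*V+L*η)) := by
    field_simp
    ring
  rw [e1]
  have e2 : W*η^2/(8*D*(2*V+L*η)) ≤ η^2/(8*D) := by
    rw [div_le_div_iff₀ (by positivity) (by positivity)]
    have hWle : W ≤ 2*V + L*η := by nlinarith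
    nlinarith [mul_le_mul_of_nonneg_right hWle (show (0:ℝ) ≤ η^2*(8*D) by positivity)]
  have e3 : -(η/(4*D))*η = -(η^2/(4*D)) := by
    field_simp
  rw [e3]
  have e4 : -(η^2/8)/D = -(η^2/(8*D)) := by
    field_simp
  rw [e4]
  have e5 : η^2/(4*D) - η^2/(8*D) = η^2/(8*D) := by
    field_simp
    ring
  linarith

end GQLT

open GQLT
open MeasureTheory ProbabilityTheory

set_option maxHeartbeats 1000000 in
/-- Lower-tail concentration for Gaussian quadratic forms:
`P(y - E y ≤ -η) ≤ exp(-(η²/8) / ((‖a‖₂² + (1/2)‖b‖₂²) + ‖a‖_∞ η))`. -/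
theorem gaussian_quadratic_lower_tail
    (N : ℕ) (hN : 0 < N) (a b : Fin N → ℝ) (η : ℝ) (hη : 0 < η) :
    (Measure.pi fun _ : Fin N => gaussianReal 0 1)
      {z | (∑ j, (a j * z j ^ 2 + b j * z j)) -
          ∫ w, (∑ j, (a j * w j ^ 2 + b j * w j))
            ∂(Measure.pi fun _ : Fin N => gaussianReal 0 1) ≤ -η}
      ≤ ENNReal.ofReal (Real.exp (-(η ^ 2 / 8) /
          (((∑ j, a j ^ 2) + (1 / 2) * ∑ j, b j ^ 2) + (⨆ j, |a j|) * η))) := by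
  classical
  letI : MeasureSpace ℝ := ⟨gaussianReal 0 1⟩
  haveI : IsProbabilityMeasure (volume : Measure ℝ) :=
    (inferInstance : IsProbabilityMeasure (gaussianReal 0 1))
  haveI : SigmaFinite (volume : Measure ℝ) := inferInstance
  have hvol : (Measure.pi fun _ : Fin N => gaussianReal 0 1) = (volume : Measure (Fin N → ℝ)) :=
    volume_pi.symm
  set μ : Measure (Fin N → ℝ) := Measure.pi fun _ : Fin N => gaussianReal 0 1 with hμ
  have hvol' : (Measure.pi fun _ : Fin N => gaussianReal 0 1) = (volume : Measure (Fin N → ℝ)) :=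
    hvol
  haveI : IsProbabilityMeasure μ := by
    constructor
    rw [hμ, Measure.pi_univ]
    simp
  -- mean computation
  have hint1 : ∀ j : Fin N, Integrable (fun w : Fin N → ℝ => a j * (w j)^2 + b j * (w j)) μ := by
    intro j
    have hprod : Integrable
        (fun w : Fin N → ℝ => ∏ i, (fun i x => if i = j then a j * x^2 + b j * x else 1) i (w i))
        volume := by
      apply Integrable.fintype_prod (f := fun i x => if i = j then a j * x^2 + b j * x else 1)
      intro i
      by_cases h : i = j
      · simp only [h, if_true]; exact integrable_gauss_poly (a j) (b j)
      · simpa [h] using (integrable_const (1:ℝ) (μ := volume))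
    rw [hvol]
    refine hprod.congr (Eventually.of_forall fun w => ?_)
    simp only [Finset.prod_ite_eq', Finset.mem_univ, if_true]
  have hone : ∀ j : Fin N, ∫ w, (a j * (w j)^2 + b j * (w j)) ∂μ = a j := by
    intro j
    have h := integral_fintype_prod_eq_prod (ι := Fin N)
      (f := fun i x => if i = j then a j * x^2 + b j * x else (1:ℝ)) (μ := fun _ => volume)
    have hL2 : ∫ w : Fin N → ℝ, ∏ i, (if i = j then a j * (w i)^2 + b j * (w i) else (1:ℝ))
        = ∫ w, (a j * (w j)^2 + b j * (w j)) ∂μ := by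
      rw [hvol]
      congr 1
      ext w
      simp only [Finset.prod_ite_eq', Finset.mem_univ, if_true]
    have hR : (∏ i, ∫ x : ℝ, (if i = j then a j * x^2 + b j * x else (1:ℝ))) = a j := by
      have hterm : ∀ i : Fin N, (∫ x : ℝ, (if i = j then a j * x^2 + b j * x else (1:ℝ)))
          = if i = j then a j else 1 := by
        intro i
        by_cases h : i = j
        · simp only [h, if_true]
          exact integral_gauss_poly (a j) (b j)
        · simp [h]
      rw [Finset.prod_congr rfl fun i _ => hterm i]
      simp [Finset.prod_ite_eq']
    rw [← hL2]
    exact h.trans hR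
  have hmean : ∫ w, (∑ j, (a j * w j ^ 2 + b j * w j)) ∂μ = ∑ j, a j := by
    rw [integral_finset_sum _ fun j _ => hint1 j]
    exact Finset.sum_congr rfl fun j _ => hone j
  rw [hmean]
  set V := ((∑ j, a j ^ 2) + (1 / 2) * ∑ j, b j ^ 2) with hV_def
  set L := (⨆ j, |a j|) with hL_def
  have hLub : ∀ j, |a j| ≤ L := fun j =>
    le_ciSup (Set.Finite.bddAbove (Set.finite_range fun j => |a j|)) j
  have hL0 : 0 ≤ L := le_trans (abs_nonneg _) (hLub ⟨0, hN⟩)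
  have ha2 : (0:ℝ) ≤ ∑ j, a j ^ 2 := Finset.sum_nonneg fun j _ => sq_nonneg _
  have hb2 : (0:ℝ) ≤ ∑ j, b j ^ 2 := Finset.sum_nonneg fun j _ => sq_nonneg _
  have hV0 : 0 ≤ V := by rw [hV_def]; positivity
  rcases eq_or_lt_of_le hV0 with hVz | hV
  · -- degenerate case : a = b = 0
    have hsa : ∑ j, a j ^ 2 = 0 := by rw [hV_def] at hVz; linarith
    have hsb : ∑ j, b j ^ 2 = 0 := by rw [hV_def] at hVz; linarith
    have ha0 : ∀ j, a j = 0 := by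
      intro j
      have := (Finset.sum_eq_zero_iff_of_nonneg fun j _ => sq_nonneg (a j)).mp hsa j
        (Finset.mem_univ j)
      exact pow_eq_zero_iff (two_ne_zero) |>.mp this
    have hb0 : ∀ j, b j = 0 := by
      intro j
      have := (Finset.sum_eq_zero_iff_of_nonneg fun j _ => sq_nonneg (b j)).mp hsb j
        (Finset.mem_univ j)
      exact pow_eq_zero_iff (two_ne_zero) |>.mp this
    have hset : {z : Fin N → ℝ | (∑ j, (a j * z j ^ 2 + b j * z j)) - ∑ j, a j ≤ -η} = ∅ := by
      ext z
      simp only [Set.mem_setOf_eq, Set.mem_empty_iff_false, iff_false, not_le]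
      rw [Finset.sum_eq_zero fun j _ => by rw [ha0 j, hb0 j]; ring,
        Finset.sum_eq_zero fun j _ => ha0 j]
      linarith
    rw [hset, measure_empty]
    exact zero_le
  · -- main case
    have hD : (0:ℝ) < V + L*η := by positivity
    set t := η/(4*(V + L*η)) with ht_def
    have ht : 0 < t := by rw [ht_def]; positivity
    have htL : 2*t*L ≤ 1/2 := by
      have h1 : 2*t*L = (L*η)/(2*(V+L*η)) := by rw [ht_def]; field_simp; ring
      rw [h1, div_le_iff₀ (by positivity)]
      nlinarith
    have hsj : ∀ j, -t*a j < 1/2 := by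
      intro j
      have h1 : -a j ≤ |a j| := neg_le_abs _
      have h2 : -t*a j ≤ t*L := by
        have := hLub j
        nlinarith
      nlinarith
    -- one-dimensional integrability and integrals
    have hIj : ∀ j, Integrable (fun x : ℝ => rexp (-t * (a j * x^2 + b j * x)))
        (gaussianReal 0 1) := by
      intro j
      exact (integrable_gauss_exp (s := -t*a j) (-t*b j) (hsj j)).congr
        (Eventually.of_forall fun x => congrArg Real.exp (by ring))
    have hGj : ∀ j, ∫ x, rexp (-t * (a j * x^2 + b j * x)) ∂(gaussianReal 0 1)
        = (Real.sqrt (1 + 2*t*a j))⁻¹ * rexp (t^2*(b j)^2/(2*(1 + 2*t*a j))) := by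
      intro j
      rw [show (fun x : ℝ => rexp (-t * (a j * x^2 + b j * x)))
          = fun x => rexp ((-t*a j) * x^2 + (-t*b j) * x) by
        funext x; congr 1; ring]
      rw [integral_gauss_exp (-t*b j) (hsj j)]
      congr 2
      · rw [show (1 - 2*(-t*a j)) = 1 + 2*t*a j by ring]
      · rw [show ((-t*b j)^2) = t^2*(b j)^2 by ring,
          show (1 - 2*(-t*a j)) = 1 + 2*t*a j by ring]
    -- integrability of exp(-t * X) over the product
    have hprodInt : Integrable
        (fun z : Fin N → ℝ => ∏ j, rexp (-t * (a j * (z j)^2 + b j * (z j)))) volume :=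
      Integrable.fintype_prod (f := fun j x => rexp (-t * (a j * x^2 + b j * x))) hIj
    have hXid : ∀ z : Fin N → ℝ,
        rexp (t * ∑ j, a j) * ∏ j, rexp (-t * (a j * (z j)^2 + b j * (z j)))
          = rexp ((-t) * ((∑ j, (a j * z j ^ 2 + b j * z j)) - ∑ j, a j)) := by
      intro z
      rw [← Real.exp_sum, ← Real.exp_add]
      congr 1
      have h1 : ∑ j, -t * (a j * (z j)^2 + b j * (z j))
          = -t * ∑ j, (a j * (z j)^2 + b j * (z j)) := by rw [← Finset.mul_sum]
      rw [h1]
      ring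
    have hXint : Integrable (fun z : Fin N → ℝ =>
        rexp ((-t) * ((∑ j, (a j * z j ^ 2 + b j * z j)) - ∑ j, a j))) μ := by
      rw [hμ, hvol']
      exact (hprodInt.const_mul (rexp (t * ∑ j, a j))).congr
        (Eventually.of_forall fun z => hXid z)
    -- Chernoff bound
    have hch := measure_le_le_exp_mul_mgf (μ := μ)
      (X := fun z : Fin N → ℝ => (∑ j, (a j * z j ^ 2 + b j * z j)) - ∑ j, a j)
      (-η) (t := -t) (by linarith) hXint
    -- compute the mgf
    have hmgf : mgf (fun z : Fin N → ℝ => (∑ j, (a j * z j ^ 2 + b j * z j)) - ∑ j, a j) μ (-t)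
        = rexp (t * ∑ j, a j)
          * ∏ j, ((Real.sqrt (1 + 2*t*a j))⁻¹ * rexp (t^2*(b j)^2/(2*(1 + 2*t*a j)))) := by
      unfold mgf
      calc ∫ z, rexp ((-t) * ((∑ j, (a j * z j ^ 2 + b j * z j)) - ∑ j, a j)) ∂μ
          = ∫ z, rexp (t * ∑ j, a j) * ∏ j, rexp (-t * (a j * (z j)^2 + b j * (z j))) ∂μ := by
            congr 1
            ext z
            rw [hXid z]
        _ = rexp (t * ∑ j, a j)
            * ∫ z, ∏ j, rexp (-t * (a j * (z j)^2 + b j * (z j))) ∂μ := integral_const_mul _ _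
        _ = rexp (t * ∑ j, a j)
            * ∏ j, ∫ x, rexp (-t * (a j * x^2 + b j * x)) ∂(gaussianReal 0 1) := by
            rw [hvol]
            exact congrArg _ (integral_fintype_prod_eq_prod (ι := Fin N)
              (f := fun j x => rexp (-t * (a j * x^2 + b j * x))))
        _ = rexp (t * ∑ j, a j)
            * ∏ j, ((Real.sqrt (1 + 2*t*a j))⁻¹ * rexp (t^2*(b j)^2/(2*(1 + 2*t*a j)))) := by
            rw [Finset.prod_congr rfl fun j _ => hGj j]
    -- bound the product
    have hprod_le : ∏ j, ((Real.sqrt (1 + 2*t*a j))⁻¹ * rexp (t^2*(b j)^2/(2*(1 + 2*t*a j))))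
        ≤ ∏ j, rexp (-(t*a j) + (2*t^2*(a j)^2 + t^2*(b j)^2/2)/(1 - 2*t*L)) := by
      refine Finset.prod_le_prod (fun j _ => by positivity)
        (fun j _ => key_coord ht (hLub j) htL)
    have hW_eq : ∑ j, (2*(a j)^2 + (b j)^2/2)
        = 2*(∑ j, a j ^ 2) + (∑ j, b j ^ 2)/2 := by
      rw [Finset.sum_add_distrib, ← Finset.mul_sum, ← Finset.sum_div]
    have hW2V : ∑ j, (2*(a j)^2 + (b j)^2/2) ≤ 2*V := by
      rw [hW_eq, hV_def]
      linarith
    have hW0 : 0 ≤ ∑ j, (2*(a j)^2 + (b j)^2/2) := by positivity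
    have hsum_exp : ∏ j, rexp (-(t*a j) + (2*t^2*(a j)^2 + t^2*(b j)^2/2)/(1 - 2*t*L))
        = rexp (-(t * ∑ j, a j) + t^2*(∑ j, (2*(a j)^2 + (b j)^2/2))/(1 - 2*t*L)) := by
      rw [← Real.exp_sum]
      congr 1
      have h1 : ∀ j : Fin N, -(t*a j) + (2*t^2*(a j)^2 + t^2*(b j)^2/2)/(1 - 2*t*L)
          = -(t*a j) + t^2*(2*(a j)^2 + (b j)^2/2)/(1 - 2*t*L) := by
        have hgen : ∀ T K A B : ℝ, -(T*A) + (2*T^2*A^2 + T^2*B^2/2)/K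
            = -(T*A) + T^2*(2*A^2 + B^2/2)/K := fun T K A B => by ring
        intro j; exact hgen t (1 - 2*t*L) (a j) (b j)
      rw [Finset.sum_congr rfl fun j _ => h1 j, Finset.sum_add_distrib]
      congr 1
      · rw [Finset.sum_neg_distrib, ← Finset.mul_sum]
      · rw [← Finset.sum_div, ← Finset.mul_sum]
    -- final exponent inequality
    have hexp_le : -(t*η) + t^2*(∑ j, (2*(a j)^2 + (b j)^2/2))/(1 - 2*t*L)
        ≤ -(η^2/8)/(V + L*η) := by
      have := final_ineq hV hL0 hη hW0 hW2V
      rw [← ht_def] at this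
      calc -(t*η) + t^2*(∑ j, (2*(a j)^2 + (b j)^2/2))/(1 - 2*t*L)
          = -t*η + t^2*(∑ j, (2*(a j)^2 + (b j)^2/2))/(1-2*t*L) := by ring_nf
        _ ≤ -(η^2/8)/(V+L*η) := this
    -- put everything together in ℝ
    have hreal : (μ {z : Fin N → ℝ | (∑ j, (a j * z j ^ 2 + b j * z j)) - ∑ j, a j ≤ -η}).toReal
        ≤ rexp (-(η^2/8)/(V + L*η)) := by
      refine le_trans hch ?_
      rw [hmgf]
      calc rexp (-(-t) * (-η)) * (rexp (t * ∑ j, a j)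
            * ∏ j, ((Real.sqrt (1 + 2*t*a j))⁻¹ * rexp (t^2*(b j)^2/(2*(1 + 2*t*a j)))))
          ≤ rexp (-(-t) * (-η)) * (rexp (t * ∑ j, a j)
            * ∏ j, rexp (-(t*a j) + (2*t^2*(a j)^2 + t^2*(b j)^2/2)/(1 - 2*t*L))) := by
            have h0 : (0:ℝ) ≤ rexp (-(-t) * (-η)) * rexp (t * ∑ j, a j) := by positivity
            refine mul_le_mul_of_nonneg_left ?_ (Real.exp_pos _).le
            exact mul_le_mul_of_nonneg_left hprod_le (Real.exp_pos _).le
        _ = rexp (-(t*η) + t^2*(∑ j, (2*(a j)^2 + (b j)^2/2))/(1 - 2*t*L)) := by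
            rw [hsum_exp, ← Real.exp_add, ← Real.exp_add]
            congr 1
            ring
        _ ≤ rexp (-(η^2/8)/(V + L*η)) := Real.exp_le_exp.mpr hexp_le
    calc μ {z : Fin N → ℝ | (∑ j, (a j * z j ^ 2 + b j * z j)) - ∑ j, a j ≤ -η}
        = ENNReal.ofReal ((μ {z : Fin N → ℝ |
            (∑ j, (a j * z j ^ 2 + b j * z j)) - ∑ j, a j ≤ -η}).toReal) :=
          (ENNReal.ofReal_toReal (measure_ne_top μ _)).symm
      _ ≤ ENNReal.ofReal (rexp (-(η^2/8)/(V + L*η))) := ENNReal.ofReal_le_ofReal hreal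
      _ = ENNReal.ofReal (Real.exp (-(η ^ 2 / 8) / (V + L * η))) := rfl
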